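/- arXiv:1211.3186 — 2 statements merged into one kernel-verified Lean document; each statement's English description precedes it below -/
import Mathlib

section
/- Depth sum of the skew diagram SΛ (equation (C.15) in the paper). Let λ and μ be partitions and let m be an integer with m ≥ |λ| + |μ|. Then n((λ + δ^{m+1}) ∪ μ) − n(δ^{m+1}) = n(λ) + n(μ) + m|μ| − n(μ'), where n(ν) = Σ_i (i−1) ν_i. -/
noncomputable section

namespace DoubleMacdonald

/-- A partition, encoded as a weakly decreasing function `ℕ → ℕ` (0-indexed: `f 0 = λ₁`)
with finitely many nonzero values. -/
def IsPartition (f : ℕ → ℕ) : Prop :=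
  (∀ ⦃i j : ℕ⦄, i ≤ j → f j ≤ f i) ∧ ∃ N, ∀ i, N ≤ i → f i = 0

/-- The size `|λ| = Σᵢ λᵢ` of a partition. -/
def psize (f : ℕ → ℕ) : ℕ := ∑ᶠ i, f i

/-- The number `ℓ(λ)` of nonzero parts of a partition. -/
def plen (f : ℕ → ℕ) : ℕ := Nat.card {i : ℕ | 1 ≤ f i}

/-- The conjugate partition: `λ'ⱼ = #{i : λᵢ ≥ j}` (0-indexed: `conj f j = λ'_{j+1}`). -/
def conj (f : ℕ → ℕ) : ℕ → ℕ := fun j => Nat.card {i : ℕ | j + 1 ≤ f i}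

/-- The staircase partition `δ^m = (m-1, m-2, …, 1, 0)`. -/
def delta (m : ℕ) : ℕ → ℕ := fun i => m - 1 - i

/-- Componentwise sum of partitions. -/
def addF (f g : ℕ → ℕ) : ℕ → ℕ := fun i => f i + g i

/-- Union `λ ∪ μ` of partitions: the weakly decreasing rearrangement of the combined
multiset of parts, defined via `(λ ∪ μ)' = λ' + μ'`. -/
def unionF (f g : ℕ → ℕ) : ℕ → ℕ := conj (addF (conj f) (conj g))

/-- Partial sum `λ₁ + ⋯ + λ_k`. -/
def psum (f : ℕ → ℕ) (k : ℕ) : ℕ := ∑ i ∈ Finset.range k, f i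

/-- The statistic `n(λ) = Σᵢ (i-1) λᵢ`. -/
def nstat (f : ℕ → ℕ) : ℕ := ∑ᶠ i, i * f i

/-- The (extended) dominance order: `f ⪰ g` iff all partial sums of `f` dominate those of `g`. -/
def Dominates (f g : ℕ → ℕ) : Prop := ∀ k, psum g k ≤ psum f k

open Finset

def G (n : ℕ) : ℕ := ∑ i ∈ Finset.range n, i

lemma G_add (a b : ℕ) : G (a + b) = G a + G b + a * b := by
  induction b with
  | zero => simp [G]
  | succ b ih =>
    have h1 : G (b + 1) = G b + b := by simp [G, Finset.sum_range_succ]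
    have h2 : G (a + (b + 1)) = G (a + b) + (a + b) := by
      simp [G, show a + (b + 1) = (a + b) + 1 from rfl, Finset.sum_range_succ]
    rw [h2, ih, h1, Nat.mul_succ]
    ring

lemma downclosed_eq_range (S : Finset ℕ)
    (h : ∀ ⦃i j : ℕ⦄, j ≤ i → i ∈ S → j ∈ S) : S = Finset.range S.card := by
  ext i
  simp only [Finset.mem_range]
  constructor
  · intro hi
    have hsub : Finset.range (i + 1) ⊆ S := fun j hj =>
      h (Nat.lt_succ_iff.mp (Finset.mem_range.mp hj)) hi
    have := Finset.card_le_card hsub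
    simpa using this
  · intro hi
    by_contra hiS
    have hsub : S ⊆ Finset.range i := by
      intro k hk
      simp only [Finset.mem_range]
      by_contra hk2
      exact hiS (h (Nat.le_of_not_lt hk2) hk)
    have := Finset.card_le_card hsub
    simp only [Finset.card_range] at this
    omega

lemma conj_eq_card (g : ℕ → ℕ) {N : ℕ} (hb : ∀ i, N ≤ i → g i = 0) (j : ℕ) :
    conj g j = ((Finset.range N).filter fun i => j + 1 ≤ g i).card := by
  have hset : {i : ℕ | j + 1 ≤ g i} = ↑((Finset.range N).filter fun i => j + 1 ≤ g i) := by
    ext i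
    simp only [Set.mem_setOf_eq, Finset.coe_filter, Finset.mem_range, Set.mem_setOf_eq]
    constructor
    · intro hgi
      refine ⟨?_, hgi⟩
      by_contra h'
      rw [hb i (le_of_not_gt h')] at hgi
      omega
    · exact fun h => h.2
  rw [conj, hset, Nat.card_coe_set_eq, Set.ncard_coe_finset]

lemma conj_eq_sum (g : ℕ → ℕ) {N : ℕ} (hb : ∀ i, N ≤ i → g i = 0) (j : ℕ) :
    conj g j = ∑ i ∈ Finset.range N, (if j + 1 ≤ g i then 1 else 0) := by
  rw [conj_eq_card g hb j, Finset.card_filter]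

lemma conj_le (g : ℕ → ℕ) {N : ℕ} (hb : ∀ i, N ≤ i → g i = 0) (j : ℕ) :
    conj g j ≤ N := by
  rw [conj_eq_card g hb j]
  exact le_trans (Finset.card_filter_le _ _) (by simp)

lemma lt_conj_iff (f : ℕ → ℕ) (hmono : ∀ ⦃i j : ℕ⦄, i ≤ j → f j ≤ f i) {N : ℕ}
    (hb : ∀ i, N ≤ i → f i = 0) (i j : ℕ) :
    j + 1 ≤ f i ↔ i < conj f j := by
  set S := (Finset.range N).filter (fun i => j + 1 ≤ f i) with hS
  have hdc : ∀ ⦃a b : ℕ⦄, b ≤ a → a ∈ S → b ∈ S := by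
    intro a b hba ha
    simp only [hS, Finset.mem_filter, Finset.mem_range] at ha ⊢
    have h2 : j + 1 ≤ f b := le_trans ha.2 (hmono hba)
    refine ⟨?_, h2⟩
    by_contra h'
    rw [hb b (le_of_not_gt h')] at h2
    omega
  have hr := downclosed_eq_range S hdc
  rw [conj_eq_card f hb j]
  constructor
  · intro h
    have hiS : i ∈ S := by
      simp only [hS, Finset.mem_filter, Finset.mem_range]
      refine ⟨?_, h⟩
      by_contra h'
      rw [hb i (le_of_not_gt h')] at h
      omega
    rw [hr] at hiS
    exact Finset.mem_range.mp hiS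
  · intro h
    have : i ∈ Finset.range S.card := Finset.mem_range.mpr h
    rw [← hr] at this
    simpa [hS] using (Finset.mem_filter.mp this).2

lemma conj_zero (f : ℕ → ℕ) (hmono : ∀ ⦃i j : ℕ⦄, i ≤ j → f j ≤ f i) {N : ℕ}
    (hb : ∀ i, N ≤ i → f i = 0) {j : ℕ} (hj : f 0 ≤ j) : conj f j = 0 := by
  rw [conj_eq_card f hb j, Finset.card_eq_zero]
  apply Finset.filter_false_of_mem
  intro i _
  have := hmono (Nat.zero_le i)
  omega

lemma psize_eq (f : ℕ → ℕ) {N : ℕ} (hb : ∀ i, N ≤ i → f i = 0) :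
    psize f = ∑ i ∈ Finset.range N, f i := by
  apply finsum_eq_sum_of_support_subset
  intro i hi
  simp only [Function.mem_support] at hi
  simp only [Finset.coe_range, Set.mem_Iio]
  by_contra h'
  exact hi (hb i (le_of_not_gt h'))

lemma nstat_eq (f : ℕ → ℕ) {N : ℕ} (hb : ∀ i, N ≤ i → f i = 0) :
    nstat f = ∑ i ∈ Finset.range N, i * f i := by
  apply finsum_eq_sum_of_support_subset
  intro i hi
  simp only [Function.mem_support] at hi
  simp only [Finset.coe_range, Set.mem_Iio]
  by_contra h'
  exact hi (by rw [hb i (le_of_not_gt h')]; ring)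

lemma sum_ite_le {M c : ℕ} (hcM : c ≤ M) (w : ℕ → ℕ) :
    ∑ j ∈ Finset.range M, (if j + 1 ≤ c then w j else 0) = ∑ j ∈ Finset.range c, w j := by
  rw [← Finset.sum_subset (Finset.range_subset_range.mpr hcM)
    (fun j _ hj => if_neg (by have := Finset.mem_range.not.mp hj; omega))]
  exact Finset.sum_congr rfl fun j hj => if_pos (Finset.mem_range.mp hj)

/-- Lemma B : `n(f) = Σⱼ G(f'ⱼ)`. -/
lemma nstat_eq_sum_G_conj (f : ℕ → ℕ) (hmono : ∀ ⦃i j : ℕ⦄, i ≤ j → f j ≤ f i)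
    {N : ℕ} (hb : ∀ i, N ≤ i → f i = 0) {M : ℕ} (hM : f 0 ≤ M) :
    nstat f = ∑ j ∈ Finset.range M, G (conj f j) := by
  rw [nstat_eq f hb]
  have step1 : ∀ i ∈ Finset.range N, i * f i
      = ∑ j ∈ Finset.range M, (if j + 1 ≤ f i then i else 0) := by
    intro i _
    rw [sum_ite_le (le_trans (hmono (Nat.zero_le i)) hM) (fun _ => i)]
    simp [Finset.sum_const, Nat.mul_comm]
  rw [Finset.sum_congr rfl step1, Finset.sum_comm]
  refine Finset.sum_congr rfl fun j _ => ?_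
  have step2 : ∀ i ∈ Finset.range N, (if j + 1 ≤ f i then i else 0)
      = (if i + 1 ≤ conj f j then i else 0) := by
    intro i _
    exact if_congr (by rw [lt_conj_iff f hmono hb i j]; exact Iff.rfl) rfl rfl
  rw [Finset.sum_congr rfl step2, sum_ite_le (conj_le f hb j) (fun i => i)]
  rfl

/-- Lemma C : `n(h') = Σᵢ G(hᵢ)`. -/
lemma nstat_conj_eq_sum_G (h : ℕ → ℕ) (hmono : ∀ ⦃i j : ℕ⦄, i ≤ j → h j ≤ h i)
    {N : ℕ} (hb : ∀ i, N ≤ i → h i = 0) :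
    nstat (conj h) = ∑ i ∈ Finset.range N, G (h i) := by
  have hcb : ∀ j, h 0 ≤ j → conj h j = 0 := fun j hj => conj_zero h hmono hb hj
  rw [nstat_eq (conj h) hcb]
  have step1 : ∀ j ∈ Finset.range (h 0), j * conj h j
      = ∑ i ∈ Finset.range N, (if j + 1 ≤ h i then j else 0) := by
    intro j _
    rw [conj_eq_sum h hb j, Finset.mul_sum]
    exact Finset.sum_congr rfl fun i _ => by split <;> simp
  rw [Finset.sum_congr rfl step1, Finset.sum_comm]
  refine Finset.sum_congr rfl fun i _ => ?_
  exact sum_ite_le (hmono (Nat.zero_le i)) (fun j => j)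

lemma psize_conj (g : ℕ → ℕ) (hmono : ∀ ⦃i j : ℕ⦄, i ≤ j → g j ≤ g i)
    {N : ℕ} (hb : ∀ i, N ≤ i → g i = 0) :
    psize (conj g) = psize g := by
  have hcb : ∀ j, g 0 ≤ j → conj g j = 0 := fun j hj => conj_zero g hmono hb hj
  rw [psize_eq (conj g) hcb, psize_eq g hb]
  have step1 : ∀ j ∈ Finset.range (g 0), conj g j
      = ∑ i ∈ Finset.range N, (if j + 1 ≤ g i then 1 else 0) :=
    fun j _ => conj_eq_sum g hb j
  rw [Finset.sum_congr rfl step1, Finset.sum_comm]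
  refine Finset.sum_congr rfl fun i _ => ?_
  rw [sum_ite_le (hmono (Nat.zero_le i)) (fun _ => 1)]
  simp

lemma le_psize (g : ℕ → ℕ) {N : ℕ} (hb : ∀ i, N ≤ i → g i = 0) (k : ℕ) :
    g k ≤ psize g := by
  have hb' : ∀ i, N + k + 1 ≤ i → g i = 0 := fun i hi => hb i (by omega)
  rw [psize_eq g hb']
  exact Finset.single_le_sum (fun i _ => Nat.zero_le _) (Finset.mem_range.mpr (by omega))

lemma part_lt_psize (g : ℕ → ℕ) (hmono : ∀ ⦃i j : ℕ⦄, i ≤ j → g j ≤ g i)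
    {N : ℕ} (hb : ∀ i, N ≤ i → g i = 0) {k : ℕ} (hk : g k ≠ 0) : k < psize g := by
  have hb' : ∀ i, N + k + 1 ≤ i → g i = 0 := fun i hi => hb i (by omega)
  rw [psize_eq g hb']
  calc k < k + 1 := Nat.lt_succ_self k
    _ = ∑ _i ∈ Finset.range (k + 1), 1 := by simp
    _ ≤ ∑ i ∈ Finset.range (k + 1), g i :=
        Finset.sum_le_sum fun i hi => by
          have := hmono (Nat.lt_succ_iff.mp (Finset.mem_range.mp hi))
          omega
    _ ≤ ∑ i ∈ Finset.range (N + k + 1), g i :=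
        Finset.sum_le_sum_of_subset (Finset.range_subset_range.mpr (by omega))

/-- **Depth sum of the skew diagram `SΛ`** (equation (C.15)).
If `λ`, `μ` are partitions and `m ≥ |λ| + |μ|`, then
`n((λ + δ^{m+1}) ∪ μ) − n(δ^{m+1}) = n(λ) + n(μ) + m|μ| − n(μ')`. -/
theorem skew_depth_sum (f g : ℕ → ℕ) (hf : IsPartition f) (hg : IsPartition g)
    (m : ℕ) (hm : psize f + psize g ≤ m) :
    (nstat (unionF (addF f (delta (m+1))) g) : ℤ) - (nstat (delta (m+1)) : ℤ) =
      (nstat f : ℤ) + (nstat g : ℤ) + (m : ℤ) * (psize g : ℤ) - (nstat (conj g) : ℤ) := by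
  obtain ⟨hfm, Nf, hfN⟩ := hf
  obtain ⟨hgm, Ng, hgN⟩ := hg
  -- bounds for f and g by their sizes
  have hfb : ∀ i, psize f ≤ i → f i = 0 := by
    intro i hi
    by_contra h'
    exact absurd (part_lt_psize f hfm hfN h') (by omega)
  have hgb : ∀ i, psize g ≤ i → g i = 0 := by
    intro i hi
    by_contra h'
    exact absurd (part_lt_psize g hgm hgN h') (by omega)
  have hfb' : ∀ i, m + 1 ≤ i → f i = 0 := fun i hi => hfb i (by omega)
  have hgb' : ∀ i, m + 1 ≤ i → g i = 0 := fun i hi => hgb i (by omega)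
  set A : ℕ → ℕ := addF f (delta (m+1)) with hA
  have hAi : ∀ i, A i = f i + (m - i) := by
    intro i
    simp only [hA, addF, delta]
    congr 1
  have hAm : ∀ ⦃i j : ℕ⦄, i ≤ j → A j ≤ A i := by
    intro i j hij
    rw [hAi, hAi]
    have := hfm hij
    omega
  have hAb : ∀ i, m + 1 ≤ i → A i = 0 := by
    intro i hi
    rw [hAi, hfb' i hi]
    omega
  set NH := f 0 + m + 1 with hNH
  have hA0 : A 0 = f 0 + m := by rw [hAi]; omega
  have hg0 : g 0 ≤ m := le_trans (le_psize g hgN 0) (by omega)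
  -- H = conj A + conj g
  set H : ℕ → ℕ := addF (conj A) (conj g) with hH
  have hHm : ∀ ⦃i j : ℕ⦄, i ≤ j → H j ≤ H i := by
    intro i j hij
    have h1 : conj A j ≤ conj A i := by
      rw [conj_eq_card A hAb, conj_eq_card A hAb]
      apply Finset.card_le_card
      intro k hk
      simp only [Finset.mem_filter] at hk ⊢
      exact ⟨hk.1, by omega⟩
    have h2 : conj g j ≤ conj g i := by
      rw [conj_eq_card g hgb', conj_eq_card g hgb']
      apply Finset.card_le_card
      intro k hk
      simp only [Finset.mem_filter] at hk ⊢
      exact ⟨hk.1, by omega⟩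
    simp only [hH, addF]
    omega
  have hHb : ∀ i, NH ≤ i → H i = 0 := by
    intro i hi
    have h1 : conj A i = 0 := conj_zero A hAm hAb (by omega)
    have h2 : conj g i = 0 := conj_zero g hgm hgb' (by omega)
    simp only [hH, addF, h1, h2]
  -- step 1: n(union) as a sum of G's
  have step1 : nstat (unionF A g) = ∑ i ∈ Finset.range NH, G (H i) :=
    nstat_conj_eq_sum_G H hHm hHb
  -- split G (H i)
  have step2 : ∀ i ∈ Finset.range NH, G (H i)
      = G (conj A i) + G (conj g i) + conj A i * conj g i := by
    intro i _
    simp only [hH, addF]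
    exact G_add _ _
  -- identify the two G-sums
  have step3 : ∑ i ∈ Finset.range NH, G (conj A i) = nstat A :=
    (nstat_eq_sum_G_conj A hAm hAb (by omega)).symm
  have step4 : ∑ i ∈ Finset.range NH, G (conj g i) = nstat g :=
    (nstat_eq_sum_G_conj g hgm hgb' (by omega)).symm
  -- n(A) = n(f) + n(delta)
  have hdb : ∀ i, m + 1 ≤ i → delta (m+1) i = 0 := by
    intro i hi
    simp only [delta]
    omega
  have step5 : nstat A = nstat f + nstat (delta (m+1)) := by
    rw [nstat_eq A hAb, nstat_eq f hfb', nstat_eq (delta (m+1)) hdb,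
      ← Finset.sum_add_distrib]
    refine Finset.sum_congr rfl fun i _ => ?_
    simp only [hA, addF]
    ring
  -- the cross term
  have hconjA : ∀ i, i < psize g → conj A i = m - i := by
    intro i hi
    rw [conj_eq_card A hAb]
    have : (Finset.range (m+1)).filter (fun k => i + 1 ≤ A k) = Finset.range (m - i) := by
      ext k
      simp only [Finset.mem_filter, Finset.mem_range, hAi]
      have hfk : f k = 0 ∨ k < psize f := by
        rcases Nat.eq_zero_or_pos (f k) with h | h
        · exact Or.inl h
        · exact Or.inr (part_lt_psize f hfm hfN (by omega))
      omega
    rw [this, Finset.card_range]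
  have hcgb : ∀ j, NH ≤ j → conj g j = 0 := fun j hj => conj_zero g hgm hgb' (by omega)
  have step6 : (∑ i ∈ Finset.range NH, conj A i * conj g i) + nstat (conj g)
      = m * psize g := by
    rw [nstat_eq (conj g) hcgb, ← Finset.sum_add_distrib]
    have hterm : ∀ i ∈ Finset.range NH, conj A i * conj g i + i * conj g i
        = m * conj g i := by
      intro i _
      rcases Nat.eq_zero_or_pos (conj g i) with h | h
      · simp [h]
      · have hig : i < psize g := by
          have := conj_le g hgb' i
          rw [conj_eq_card g hgb'] at h
          obtain ⟨k, hk⟩ := Finset.card_pos.mp h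
          simp only [Finset.mem_filter] at hk
          have := le_psize g hgN k
          omega
        have h2 : conj A i + i = m := by
          rw [hconjA i hig]
          omega
        rw [← Nat.add_mul, h2]
    rw [Finset.sum_congr rfl hterm, ← Finset.mul_sum, ← psize_eq (conj g) hcgb,
      psize_conj g hgm hgb']
  -- assemble
  have key : nstat (unionF A g)
      = nstat A + nstat g + ∑ i ∈ Finset.range NH, conj A i * conj g i := by
    rw [step1, Finset.sum_congr rfl step2, Finset.sum_add_distrib,
      Finset.sum_add_distrib, step3, step4]
  have h1 : (nstat (unionF A g) : ℤ)
      = (nstat f : ℤ) + (nstat (delta (m+1)) : ℤ) + (nstat g : ℤ)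
        + ((∑ i ∈ Finset.range NH, conj A i * conj g i : ℕ) : ℤ) := by
    rw [key, step5]
    push_cast
    ring
  have h2 : ((∑ i ∈ Finset.range NH, conj A i * conj g i : ℕ) : ℤ)
      + (nstat (conj g) : ℤ) = (m : ℤ) * (psize g : ℤ) := by
    exact_mod_cast step6
  rw [h1]
  linarith

end DoubleMacdonald
end
end

section
/- Factorization of the hook product h↓_Λ in the stable sector (equation (C.10)). Let λ and μ be partitions and let m be an integer with m ≥ |λ| + |μ|. Set Λ* = (λ + δ^m) ∪ μ and Λ⊛ = (λ + δ^{m+1}) ∪ μ. Say a cell (i,j) of Λ* (i.e. 1 ≤ j ≤ Λ*_i) is bosonic if it is NOT the case that both Λ⊛_i = Λ*_i + 1 and (Λ⊛)'_j = (Λ*)'_j + 1. Then the following identity holds in the polynomial ring ℤ[q,t]: ∏_{(i,j) bosonic} (1 − q^{Λ⊛_i − j} t^{(Λ*)'_j − i + 1}) = ∏_{(i,j) ∈ λ} (1 − q^{λ_i − j} (qt)^{λ'_j − i + 1}) · ∏_{(i,j) ∈ μ} (1 − (qt)^{μ_i − j} t^{μ'_j − i + 1}); in other words, h↓_Λ(q,t)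 = c_λ(q,qt) c_μ(qt,t). -/
noncomputable section

namespace DoubleMacdonald

open MvPolynomial

/-- The indeterminate `q` in `ℤ[q,t]`. -/
def qp : MvPolynomial (Fin 2) ℤ := X 0

/-- The indeterminate `t` in `ℤ[q,t]`. -/
def tp : MvPolynomial (Fin 2) ℤ := X 1

/-- A cell `(i,j)` (0-indexed) of `Λ*` is bosonic for the pair `(Λ*, Λ⊛)` if it is NOT
the case that both `Λ⊛ᵢ = Λ*ᵢ + 1` and `(Λ⊛)'ⱼ = (Λ*)'ⱼ + 1`. -/
def Bosonic (L Ls : ℕ → ℕ) (i j : ℕ) : Prop :=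
  ¬(Ls i = L i + 1 ∧ conj Ls j = conj L j + 1)

instance (L Ls : ℕ → ℕ) (i j : ℕ) : Decidable (Bosonic L Ls i j) := by
  unfold Bosonic; infer_instance

/-- The hook product `h↓_Λ(q,t) = ∏_{s ∈ BΛ} (1 − q^{a_{Λ⊛}(s)} t^{l_{Λ*}(s)+1})`
over the bosonic cells of `Λ*`, as an element of `ℤ[q,t]`.
In 0-indexed coordinates, for a cell `(i,j)` of `Λ*` the arm in `Λ⊛` is `Λ⊛ᵢ − (j+1)`
and the leg in `Λ*` plus 1 is `(Λ*)'ⱼ − i`. -/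
def hdown (L Ls : ℕ → ℕ) : MvPolynomial (Fin 2) ℤ :=
  ∏ i ∈ Finset.range (plen L), ∏ j ∈ Finset.range (L i),
    if Bosonic L Ls i j then (1 - qp ^ (Ls i - (j + 1)) * tp ^ (conj L j - i)) else 1

/-- The hook product `c_ν(a,b) = ∏_{s ∈ ν} (1 − a^{arm(s)} b^{leg(s)+1})` for a partition `ν`,
with `a, b` each a monomial in `q, t`. -/
def cprod (a b : MvPolynomial (Fin 2) ℤ) (f : ℕ → ℕ) : MvPolynomial (Fin 2) ℤ :=
  ∏ i ∈ Finset.range (plen f), ∏ j ∈ Finset.range (f i),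
    (1 - a ^ (f i - (j + 1)) * b ^ (conj f j - i))

lemma conj_lt_iff {f : ℕ → ℕ} (hf : IsPartition f) (i j : ℕ) :
    i < conj f j ↔ j < f i := by
  obtain ⟨N, hN⟩ := hf.2
  have hex : ∃ n, f n ≤ j := ⟨N, by simp [hN N le_rfl]⟩
  have key : ∀ i : ℕ, i < Nat.find hex ↔ j < f i := by
    intro i
    constructor
    · intro hi
      exact lt_of_not_ge (Nat.find_min hex hi)
    · intro hj
      by_contra h
      have h2 : f i ≤ f (Nat.find hex) := hf.1 (le_of_not_gt h)
      have h3 := Nat.find_spec hex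
      omega
  have hset : {i : ℕ | j + 1 ≤ f i} = ↑(Finset.range (Nat.find hex)) := by
    ext x
    simp only [Set.mem_setOf_eq, Finset.coe_range, Set.mem_Iio]
    rw [key x]
    omega
  have hconj : conj f j = Nat.find hex := by
    rw [conj, hset, Nat.card_eq_card_finite_toFinset (Finset.finite_toSet _)]
    simp
  rw [hconj, key i]

lemma nat_eq_of_lt_iff {a b : ℕ} (h : ∀ j, j < a ↔ j < b) : a = b := by
  rcases lt_trichotomy a b with h1 | h1 | h1
  · exact absurd ((h a).mpr h1) (lt_irrefl a)
  · exact h1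
  · exact absurd ((h b).mp h1) (lt_irrefl b)

lemma conj_eq {f : ℕ → ℕ} (hf : IsPartition f) {c j : ℕ}
    (h1 : ∀ i < c, j < f i) (h2 : f c ≤ j) : conj f j = c := by
  have hle : conj f j ≤ c := by
    by_contra h
    exact absurd ((conj_lt_iff hf c j).mp (by omega)) (by omega)
  have hge : c ≤ conj f j := by
    rcases Nat.eq_zero_or_pos c with h | h
    · omega
    · have := (conj_lt_iff hf (c-1) j).mpr (h1 (c-1) (by omega))
      omega
  omega

lemma isPartition_conj {f : ℕ → ℕ} (hf : IsPartition f) : IsPartition (conj f) := by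
  constructor
  · intro j j' hj
    by_contra h
    have h2 := (conj_lt_iff hf (conj f j) j').mp (by omega)
    have h3 := (conj_lt_iff hf (conj f j) j).mpr (by omega)
    omega
  · exact ⟨f 0, fun j hj => by
      by_contra h
      have := (conj_lt_iff hf 0 j).mp (by omega)
      have := hf.1 (Nat.zero_le 0)
      omega⟩

lemma conj_conj {f : ℕ → ℕ} (hf : IsPartition f) : conj (conj f) = f := by
  funext i
  apply nat_eq_of_lt_iff
  intro j
  rw [conj_lt_iff (isPartition_conj hf) j i, conj_lt_iff hf i j]

lemma isPartition_addF {f g : ℕ → ℕ} (hf : IsPartition f) (hg : IsPartition g) :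
    IsPartition (addF f g) := by
  constructor
  · intro i j hij
    exact Nat.add_le_add (hf.1 hij) (hg.1 hij)
  · obtain ⟨N, hN⟩ := hf.2
    obtain ⟨M, hM⟩ := hg.2
    exact ⟨max N M, fun i hi => by
      simp [addF, hN i (le_trans (le_max_left _ _) hi), hM i (le_trans (le_max_right _ _) hi)]⟩

lemma isPartition_delta (m : ℕ) : IsPartition (delta m) :=
  ⟨fun i j hij => Nat.sub_le_sub_left hij _, ⟨m, fun i hi => by simp [delta]; omega⟩⟩

lemma plen_eq_conj_zero (f : ℕ → ℕ) : plen f = conj f 0 := rfl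

lemma psize_eq_sum {f : ℕ → ℕ} (N : ℕ) (hN : ∀ i, N ≤ i → f i = 0) :
    psize f = ∑ i ∈ Finset.range N, f i := by
  apply finsum_eq_finset_sum_of_support_subset
  intro i hi
  simp only [Function.mem_support] at hi
  simp only [Finset.coe_range, Set.mem_Iio]
  by_contra h
  exact hi (hN i (le_of_not_gt h))

lemma sum_range_le_psize {f : ℕ → ℕ} (hf : IsPartition f) (k : ℕ) :
    ∑ i ∈ Finset.range k, f i ≤ psize f := by
  obtain ⟨N, hN⟩ := hf.2
  rw [psize_eq_sum (f := f) (max k N) (fun i hi => hN i (le_trans (le_max_right _ _) hi))]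
  exact Finset.sum_le_sum_of_subset (Finset.range_subset_range.2 (le_max_left _ _))

lemma plen_le_psize {f : ℕ → ℕ} (hf : IsPartition f) : plen f ≤ psize f := by
  rw [plen_eq_conj_zero]
  calc conj f 0 = ∑ _i ∈ Finset.range (conj f 0), 1 := by simp
  _ ≤ ∑ i ∈ Finset.range (conj f 0), f i := by
      apply Finset.sum_le_sum
      intro i hi
      simp only [Finset.mem_range] at hi
      have := (conj_lt_iff hf i 0).mp hi
      omega
  _ ≤ psize f := sum_range_le_psize hf _

lemma part_le_psize {f : ℕ → ℕ} (hf : IsPartition f) (i : ℕ) : f i ≤ psize f := by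
  calc f i ≤ ∑ k ∈ Finset.range (i+1), f k :=
        Finset.single_le_sum (fun k _ => Nat.zero_le _) (Finset.self_mem_range_succ i)
  _ ≤ psize f := sum_range_le_psize hf _

lemma zero_of_plen_le {f : ℕ → ℕ} (hf : IsPartition f) {i : ℕ} (h : plen f ≤ i) : f i = 0 := by
  rw [plen_eq_conj_zero] at h
  by_contra hc
  have := (conj_lt_iff hf i 0).mpr (by omega)
  omega

lemma conj_mono {f g : ℕ → ℕ} (hf : IsPartition f) (hg : IsPartition g)
    (h : ∀ i, f i ≤ g i) (j : ℕ) : conj f j ≤ conj g j := by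
  by_contra hc
  have h1 := (conj_lt_iff hf (conj g j) j).mp (by omega)
  have h2 := (conj_lt_iff hg (conj g j) j).mpr (by have := h (conj g j); omega)
  omega


/-- **Factorization of the hook product `h↓_Λ` in the stable sector** (equation (C.10)).
If `λ`, `μ` are partitions and `m ≥ |λ| + |μ|`, then with `Λ* = (λ + δ^m) ∪ μ` and
`Λ⊛ = (λ + δ^{m+1}) ∪ μ` one has, in `ℤ[q,t]`:
`h↓_Λ(q,t) = c_λ(q,qt) · c_μ(qt,t)`. -/
theorem hdown_factorization (f g : ℕ → ℕ) (hf : IsPartition f) (hg : IsPartition g)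
    (m : ℕ) (hm : psize f + psize g ≤ m) :
    hdown (unionF (addF f (delta m)) g) (unionF (addF f (delta (m+1))) g) =
      cprod qp (qp * tp) f * cprod (qp * tp) tp g := by
  classical
  set A := addF f (delta m) with hAdef
  set A2 := addF f (delta (m+1)) with hA2def
  have hPA : IsPartition A := isPartition_addF hf (isPartition_delta m)
  have hPA2 : IsPartition A2 := isPartition_addF hf (isPartition_delta (m+1))
  set W := addF (conj A) (conj g) with hWdef
  set W2 := addF (conj A2) (conj g) with hW2def
  have hPW : IsPartition W := isPartition_addF (isPartition_conj hPA) (isPartition_conj hg)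
  have hPW2 : IsPartition W2 := isPartition_addF (isPartition_conj hPA2) (isPartition_conj hg)
  have hU1 : unionF A g = conj W := rfl
  have hU2 : unionF A2 g = conj W2 := rfl
  have hcW : conj (conj W) = W := conj_conj hPW
  have hcW2 : conj (conj W2) = W2 := conj_conj hPW2
  have gf : ∀ i j, i < conj f j ↔ j < f i := fun i j => conj_lt_iff hf i j
  have gg : ∀ i j, i < conj g j ↔ j < g i := fun i j => conj_lt_iff hg i j
  have gA : ∀ i j, i < conj A j ↔ j < A i := fun i j => conj_lt_iff hPA i j
  have gA2 : ∀ i j, i < conj A2 j ↔ j < A2 i := fun i j => conj_lt_iff hPA2 i j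
  have gW : ∀ j k, j < conj W k ↔ k < W j := fun j k => conj_lt_iff hPW j k
  have gW2 : ∀ j k, j < conj W2 k ↔ k < W2 j := fun j k => conj_lt_iff hPW2 j k
  have hWv : ∀ j, W j = conj A j + conj g j := fun j => rfl
  have hW2v : ∀ j, W2 j = conj A2 j + conj g j := fun j => rfl
  have hAv : ∀ i, A i = f i + (m - 1 - i) := fun i => rfl
  have hA2v : ∀ i, A2 i = f i + (m - i) := by
    intro i
    show f i + (m + 1 - 1 - i) = f i + (m - i)
    norm_num
  have hLf : plen f ≤ psize f := plen_le_psize hf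
  have hLg : plen g ≤ psize g := plen_le_psize hg
  have hfL : ∀ i, plen f ≤ i → f i = 0 := fun i h => zero_of_plen_le hf h
  have hgsz : ∀ p, g p ≤ psize g := fun p => part_le_psize hg p
  have hgm : ∀ p, g p ≤ m := fun p => le_trans (hgsz p) (by omega)
  have hfpos : ∀ i, i < plen f → 0 < f i := by
    intro i hi
    have := (gf i 0).mp (by rw [plen_eq_conj_zero] at hi; exact hi)
    omega
  have hgpos : ∀ p, p < plen g → 0 < g p := by
    intro p hp
    have := (gg p 0).mp (by rw [plen_eq_conj_zero] at hp; exact hp)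
    omega
  have CG0 : ∀ j, psize g ≤ j → conj g j = 0 := by
    intro j hj
    exact conj_eq hg (fun i hi => absurd hi (Nat.not_lt_zero i)) (le_trans (hgsz 0) hj)
  have CA1 : ∀ j, plen f + j + 1 ≤ m → conj A j = m - 1 - j := by
    intro j hj
    apply conj_eq hPA
    · intro i hi
      have := hAv i
      omega
    · have h0 : f (m - 1 - j) = 0 := hfL _ (by omega)
      have := hAv (m - 1 - j)
      omega
  have CA2 : ∀ j, plen f + j + 1 ≤ m → conj A2 j = m - j := by
    intro j hj
    apply conj_eq hPA2
    · intro i hi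
      have := hA2v i
      omega
    · have h0 : f (m - j) = 0 := hfL _ (by omega)
      have := hA2v (m - j)
      omega
  have hcAm : ∀ j, conj A j ≤ m := by
    intro j
    by_contra h
    have := (gA m j).mp (by omega)
    have := hAv m
    have := hfL m (by omega)
    omega
  have hcAmono : ∀ j, conj A j ≤ conj A2 j := by
    intro j
    apply conj_mono hPA hPA2
    intro i
    have := hAv i
    have := hA2v i
    omega
  have RowL : ∀ i, i < plen f → conj W i = f i + (m - 1 - i) ∧ conj W2 i = f i + (m - i) := by
    intro i hi
    have hfi := hfpos i hi
    constructor
    · apply nat_eq_of_lt_iff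
      intro j
      constructor
      · intro hj
        by_contra hjc
        have h1 : conj A j ≤ i := by
          by_contra h
          have := (gA i j).mp (by omega)
          have := hAv i
          omega
        have h2 : conj g j = 0 := CG0 j (by omega)
        have := (gW j i).mp hj
        have := hWv j
        omega
      · intro hj
        apply (gW j i).mpr
        have h1 : i < conj A j := (gA i j).mpr (by have := hAv i; omega)
        have := hWv j
        omega
    · apply nat_eq_of_lt_iff
      intro j
      constructor
      · intro hj
        by_contra hjc
        have h1 : conj A2 j ≤ i := by
          by_contra h
          have := (gA2 i j).mp (by omega)
          have := hA2v i
          omega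
        have h2 : conj g j = 0 := CG0 j (by omega)
        have := (gW2 j i).mp hj
        have := hW2v j
        omega
      · intro hj
        apply (gW2 j i).mpr
        have h1 : i < conj A2 j := (gA2 i j).mpr (by have := hA2v i; omega)
        have := hW2v j
        omega
  have RowM : ∀ p, p < plen g → conj W (m - g p + p) = g p ∧ conj W2 (m - g p + p) = g p := by
    intro p hp
    have hgp := hgpos p hp
    have hgpm := hgm p
    have hgps := hgsz p
    have hfLm : plen f ≤ m - g p := by omega
    have hAval : A (m - g p) = g p - 1 := by
      have := hAv (m - g p)
      have := hfL (m - g p) hfLm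
      omega
    have hA2val : A2 (m - g p) = g p := by
      have := hA2v (m - g p)
      have := hfL (m - g p) hfLm
      omega
    have hlow : ∀ j, j < g p → m - 1 - j ≤ conj A j ∧ p < conj g j := by
      intro j hj
      constructor
      · rcases le_or_gt m (j + 1) with h | h
        · omega
        · have : m - j - 2 < conj A j := by
            apply (gA _ j).mpr
            have := hAv (m - j - 2)
            omega
          omega
      · exact (gg p j).mpr hj
    constructor
    · apply nat_eq_of_lt_iff
      intro j
      constructor
      · intro hj
        by_contra hjc
        have h1 : conj A j ≤ m - g p := by
          by_contra h
          have := (gA (m - g p) j).mp (by omega)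
          omega
        have h2 : conj g j ≤ p := by
          by_contra h
          have := (gg p j).mp (by omega)
          omega
        have := (gW j _).mp hj
        have := hWv j
        omega
      · intro hj
        apply (gW j _).mpr
        obtain ⟨h1, h2⟩ := hlow j hj
        have := hWv j
        omega
    · apply nat_eq_of_lt_iff
      intro j
      constructor
      · intro hj
        by_contra hjc
        have h1 : conj A2 j ≤ m - g p := by
          by_contra h
          have := (gA2 (m - g p) j).mp (by omega)
          omega
        have h2 : conj g j ≤ p := by
          by_contra h
          have := (gg p j).mp (by omega)
          omega
        have := (gW2 j _).mp hj
        have := hW2v j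
        omega
      · intro hj
        apply (gW2 j _).mpr
        obtain ⟨h1, h2⟩ := hlow j hj
        have h3 := hcAmono j
        have := hW2v j
        omega
  have RowO : ∀ k, plen f ≤ k → k < W 0 → (∀ p, p < plen g → k ≠ m - g p + p) →
      conj W2 k = conj W k + 1 ∧ ∀ j, j < conj W k → conj A2 j = conj A j + 1 := by
    intro k hk1 hk2 hk3
    set v := conj W k with hvdef
    have hv1 : 1 ≤ v := by
      have := (gW 0 k).mpr hk2
      omega
    have hvm : v + plen f ≤ m := by
      have h1 : conj g (m - plen f) = 0 := CG0 _ (by omega)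
      have h2 : conj A (m - plen f) ≤ plen f := by
        by_contra h
        have := (gA (plen f) (m - plen f)).mp (by omega)
        have h4 := hAv (plen f)
        have h5 := hfL (plen f) le_rfl
        omega
      have h3 : ¬ (m - plen f < v) := by
        intro h
        have := (gW (m - plen f) k).mp (by omega)
        have := hWv (m - plen f)
        omega
      omega
    have hWk1 : k + 1 ≤ W (v - 1) := by
      have := (gW (v - 1) k).mp (by omega)
      omega
    have hWk2 : W v ≤ k := by
      by_contra h
      have := (gW v k).mpr (by omega)
      omega
    rcases Nat.lt_or_ge (v + plen f) m with hc | hc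
    · -- C1
      have hcAv : conj A v = m - 1 - v := CA1 v (by omega)
      have hcAv1 : conj A (v - 1) = m - v := by
        have := CA1 (v - 1) (by omega)
        omega
      have hcA2v : conj A2 v = m - v := CA2 v (by omega)
      have key : k ≤ W v := by
        by_contra hcon
        set p := k + v - m with hpdef
        have hWv1 := hWv (v - 1)
        have hWvv := hWv v
        have hp1 : p < conj g (v - 1) := by omega
        have hp2 : conj g v ≤ p := by omega
        have hgpv : g p = v := by
          have h1 : v - 1 < g p := (gg p (v - 1)).mp hp1
          have h2 : ¬ (v < g p) := fun h => absurd ((gg p v).mpr h) (by omega)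
          omega
        have hpn : p < plen g := by
          rw [plen_eq_conj_zero]
          have : conj g (v - 1) ≤ conj g 0 := (isPartition_conj hg).1 (Nat.zero_le _)
          omega
        exact hk3 p hpn (by omega)
      have hWeq : W v = k := le_antisymm hWk2 key
      constructor
      · apply nat_eq_of_lt_iff
        intro j
        constructor
        · intro hj
          by_contra hjc
          have hA2v1 : conj A2 (v + 1) ≤ m - 1 - v := by
            by_contra h
            have := (gA2 (m - 1 - v) (v + 1)).mp (by omega)
            have h4 := hA2v (m - 1 - v)
            have h5 := hfL (m - 1 - v) (by omega)
            omega
          have hmono2 : W2 j ≤ W2 (v + 1) := hPW2.1 (by omega)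
          have h6 : conj g (v + 1) ≤ conj g v := (isPartition_conj hg).1 (by omega)
          have := (gW2 j k).mp hj
          have := hW2v (v + 1)
          have := hWv v
          omega
        · intro hj
          apply (gW2 j k).mpr
          have hmono2 : W2 v ≤ W2 j := hPW2.1 (by omega)
          have := hW2v v
          have := hWv v
          omega
      · intro j hj
        have e1 := CA1 j (by omega)
        have e2 := CA2 j (by omega)
        omega
    · -- C2 : impossible
      exfalso
      have hcgv : conj g v = 0 := CG0 v (by omega)
      have hcA1 : conj A (v - 1) = plen f := by
        have := CA1 (v - 1) (by omega)
        omega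
      have hWv1 := hWv (v - 1)
      have hcg1pos : 1 ≤ conj g (v - 1) := by omega
      have hg0 : g 0 = v := by
        have h1 : v - 1 < g 0 := (gg 0 (v - 1)).mp (by omega)
        have h2 : g 0 ≤ psize g := hgsz 0
        omega
      have hg1 : g 1 = 0 := by
        have h2 := sum_range_le_psize hg 2
        rw [Finset.sum_range_succ, Finset.sum_range_one] at h2
        omega
      have hcg1 : conj g (v - 1) ≤ 1 := by
        by_contra h
        have := (gg 1 (v - 1)).mp (by omega)
        omega
      have hplg : 0 < plen g := by
        rw [plen_eq_conj_zero]
        have := (gg 0 0).mpr (show 0 < g 0 by omega)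
        omega
      exact hk3 0 hplg (by omega)
  -- assemble
  rw [hU1, hU2]
  show (∏ i ∈ Finset.range (plen (conj W)), ∏ j ∈ Finset.range (conj W i),
      if Bosonic (conj W) (conj W2) i j then
        (1 - qp ^ (conj W2 i - (j + 1)) * tp ^ (conj (conj W) j - i)) else 1) = _
  have hplen : plen (conj W) = W 0 := by rw [plen_eq_conj_zero, hcW]
  rw [hplen]
  simp only [hcW]
  set S2 : Finset ℕ := (Finset.range (plen g)).image (fun p => m - g p + p) with hS2def
  have hmemS2 : ∀ k, k ∈ S2 ↔ ∃ p, p < plen g ∧ m - g p + p = k := by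
    intro k
    simp [hS2def, Finset.mem_image]
  have hsub : Finset.range (plen f) ∪ S2 ⊆ Finset.range (W 0) := by
    intro k hk
    rw [Finset.mem_union] at hk
    rw [Finset.mem_range]
    rcases hk with hk | hk
    · rw [Finset.mem_range] at hk
      have h1 : k < conj A 0 := (gA k 0).mpr (by have := hAv k; have := hfpos k hk; omega)
      have := hWv 0
      omega
    · obtain ⟨p, hp, hpk⟩ := (hmemS2 k).mp hk
      have hgp := hgpos p hp
      have h1 : p < conj g 0 := (gg p 0).mpr (by omega)
      have h2 : m - g p ≤ conj A 0 := by
        rcases Nat.eq_zero_or_pos (m - g p) with h | h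
        · omega
        · have : m - g p - 1 < conj A 0 := by
            apply (gA _ 0).mpr
            have := hAv (m - g p - 1)
            have := hgm p
            omega
          omega
      have := hWv 0
      omega
  have hdisj : Disjoint (Finset.range (plen f)) S2 := by
    rw [Finset.disjoint_left]
    intro k hk1 hk2
    rw [Finset.mem_range] at hk1
    obtain ⟨p, hp, hpk⟩ := (hmemS2 k).mp hk2
    have := hgsz p
    omega
  rw [← Finset.prod_subset hsub ?_]
  · rw [Finset.prod_union hdisj]
    congr 1
    · -- λ part
      show _ = cprod qp (qp * tp) f
      unfold cprod
      apply Finset.prod_congr rfl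
      intro i hi
      rw [Finset.mem_range] at hi
      obtain ⟨hVi, hV2i⟩ := RowL i hi
      have hfi := hfpos i hi
      have him : i < m := by omega
      have hrowferm : conj W2 i = conj W i + 1 := by
        rw [hVi, hV2i]
        omega
      rw [← Finset.prod_filter]
      have hfacts : ∀ j ∈ (Finset.range (conj W i)).filter (Bosonic (conj W) (conj W2) i),
          j + conj A j - m < f i ∧ m ≤ j + conj A j ∧
          conj f (j + conj A j - m) = conj A j ∧ i < conj A j ∧
          conj A j ≤ plen f ∧ conj g j = 0 := by
        intro j hj
        rw [Finset.mem_filter, Finset.mem_range] at hj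
        obtain ⟨hj1, hjB⟩ := hj
        have hdm := hcAm j
        have hb2 : conj A2 j ≤ conj A j + 1 := by
          by_contra h
          have h1 : j < A2 (conj A j + 1) := (gA2 _ j).mp (by omega)
          have h2 : A (conj A j) ≤ j := by
            by_contra h2
            have := (gA (conj A j) j).mpr (by omega)
            omega
          have h3 : f (conj A j + 1) ≤ f (conj A j) := hf.1 (by omega)
          have := hA2v (conj A j + 1)
          have := hAv (conj A j)
          omega
        have heq2 : conj A2 j = conj A j := by
          have hnc : ¬ (conj (conj W2) j = conj (conj W) j + 1) := fun hcol => hjB ⟨hrowferm, hcol⟩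
          rw [hcW, hcW2, hWv j, hW2v j] at hnc
          have := hcAmono j
          omega
        have hbig : m ≤ j + conj A j := by
          rcases Nat.lt_or_ge j m with h | h
          · have : m - j - 1 < conj A2 j := by
              apply (gA2 _ j).mpr
              have := hA2v (m - j - 1)
              omega
            omega
          · omega
        have hfd : f (conj A j) ≤ j + conj A j - m := by
          have h1 : A2 (conj A j) ≤ j := by
            by_contra h
            have := (gA2 (conj A j) j).mpr (by omega)
            omega
          have := hA2v (conj A j)
          omega
        have hhigh : ∀ i', i' < conj A j → j + conj A j - m < f i' := by
          intro i' hi'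
          have h1 : j < A (conj A j - 1) := (gA _ j).mp (by omega)
          have h2 : f (conj A j - 1) ≤ f i' := hf.1 (by omega)
          have := hAv (conj A j - 1)
          omega
        have hcfc : conj f (j + conj A j - m) = conj A j := conj_eq hf hhigh hfd
        have hifi : i < conj A j := (gA i j).mpr (by have := hAv i; omega)
        have hdL : conj A j ≤ plen f := by
          rw [plen_eq_conj_zero, ← hcfc]
          exact (isPartition_conj hf).1 (Nat.zero_le _)
        have hg0 : conj g j = 0 := CG0 j (by omega)
        exact ⟨hhigh i hifi, hbig, hcfc, hifi, hdL, hg0⟩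
      have hcfacts : ∀ c, c < f i →
          conj A (m + c - conj f c) = conj f c ∧ conj A2 (m + c - conj f c) = conj f c ∧
          conj g (m + c - conj f c) = 0 ∧ m + c - conj f c < conj W i ∧
          i < conj f c ∧ conj f c ≤ plen f := by
        intro c hc
        have hd1 : i < conj f c := (gf i c).mpr hc
        have hd2 : conj f c ≤ plen f := by
          rw [plen_eq_conj_zero]
          exact (isPartition_conj hf).1 (Nat.zero_le c)
        have hfd' : f (conj f c) ≤ c := by
          by_contra h
          have := (gf (conj f c) c).mpr (by omega)
          omega
        have e1 : conj A (m + c - conj f c) = conj f c := by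
          apply conj_eq hPA
          · intro i' hi'
            have h1 : c < f i' := (gf i' c).mp (by omega)
            have := hAv i'
            omega
          · have := hAv (conj f c)
            omega
        have e2 : conj A2 (m + c - conj f c) = conj f c := by
          apply conj_eq hPA2
          · intro i' hi'
            have h1 : c < f i' := (gf i' c).mp (by omega)
            have := hA2v i'
            omega
          · have := hA2v (conj f c)
            omega
        have e3 : conj g (m + c - conj f c) = 0 := CG0 _ (by omega)
        have e4 : m + c - conj f c < conj W i := by
          rw [hVi]
          omega
        exact ⟨e1, e2, e3, e4, hd1, hd2⟩
      refine Finset.prod_nbij' (fun j => j + conj A j - m) (fun c => m + c - conj f c)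
        ?_ ?_ ?_ ?_ ?_
      · intro j hj
        rw [Finset.mem_range]
        exact (hfacts j hj).1
      · intro c hc
        rw [Finset.mem_range] at hc
        obtain ⟨e1, e2, e3, e4, e5, e6⟩ := hcfacts c hc
        rw [Finset.mem_filter, Finset.mem_range]
        refine ⟨e4, ?_⟩
        intro hand
        have h2 := hand.2
        rw [hcW, hcW2, hWv _, hW2v _, e1, e2] at h2
        omega
      · intro j hj
        obtain ⟨e1, e2, e3, e4, e5, e6⟩ := hfacts j hj
        show m + (j + conj A j - m) - conj f (j + conj A j - m) = j
        rw [e3]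
        omega
      · intro c hc
        rw [Finset.mem_range] at hc
        obtain ⟨e1, e2, e3, e4, e5, e6⟩ := hcfacts c hc
        show m + c - conj f c + conj A (m + c - conj f c) - m = c
        rw [e1]
        omega
      · intro j hj
        obtain ⟨e1, e2, e3, e4, e5, e6⟩ := hfacts j hj
        have hE1 : conj W2 i - (j + 1) =
            (f i - (j + conj A j - m + 1)) + (conj f (j + conj A j - m) - i) := by
          rw [hV2i, e3]
          omega
        have hE2 : W j - i = conj f (j + conj A j - m) - i := by
          rw [hWv j, e3, e6]
          omega
        rw [hE1, hE2, pow_add, mul_pow]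
        ring
    · -- μ part
      show _ = cprod (qp * tp) tp g
      have hinj : ∀ x ∈ Finset.range (plen g), ∀ y ∈ Finset.range (plen g),
          m - g x + x = m - g y + y → x = y := by
        intro x hx y hy hxy
        have h1 := hgm x
        have h2 := hgm y
        rcases Nat.lt_trichotomy x y with h | h | h
        · have := hg.1 (le_of_lt h)
          omega
        · exact h
        · have := hg.1 (le_of_lt h)
          omega
      rw [hS2def, Finset.prod_image hinj]
      unfold cprod
      apply Finset.prod_congr rfl
      intro p hp
      rw [Finset.mem_range] at hp
      obtain ⟨hV, hV2⟩ := RowM p hp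
      rw [hV, hV2]
      apply Finset.prod_congr rfl
      intro j hj
      rw [Finset.mem_range] at hj
      have hB : Bosonic (conj W) (conj W2) (m - g p + p) j := by
        intro hand
        rw [hV, hV2] at hand
        omega
      rw [if_pos hB]
      have hcgj : p < conj g j := (gg p j).mpr hj
      have hcAj : conj A j = m - 1 - j := CA1 j (by have := hgsz p; omega)
      have hWj := hWv j
      have hgpm := hgm p
      have hE : W j - (m - g p + p) = (g p - (j + 1)) + (conj g j - p) := by omega
      rw [hE, pow_add, mul_pow]
      ring
  · -- other rows give 1
    intro k hk hk2
    rw [Finset.mem_range] at hk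
    rw [Finset.mem_union, Finset.mem_range] at hk2
    push_neg at hk2
    obtain ⟨hk2a, hk2b⟩ := hk2
    have hk3 : ∀ p, p < plen g → k ≠ m - g p + p := by
      intro p hp hne
      exact hk2b ((hmemS2 k).mpr ⟨p, hp, hne.symm⟩)
    obtain ⟨hstep, hcol⟩ := RowO k (by omega) hk hk3
    apply Finset.prod_eq_one
    intro j hj
    rw [Finset.mem_range] at hj
    rw [if_neg]
    simp only [Bosonic, not_not]
    refine ⟨hstep, ?_⟩
    rw [hcW, hcW2, hWv j, hW2v j, hcol j hj]
    omega


end DoubleMacdonald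
end
end
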